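/- arXiv:1612.02162 — 2 statements merged into one kernel-verified Lean document; each statement's English description precedes it below -/
import Mathlib

section
/- Let A be an n×n real matrix with a real eigenpair (λ, u), i.e., Au = λu and |u|² = 1 with λ ∈ ℝ and u ∈ ℝⁿ. If the (n+1)×(n+1) bordered matrix J(u,λ) = [[A−λI, −u],[−2uᵀ, 0]] is nonsingular, then λ is a simple eigenvalue of A (i.e., has algebraic multiplicity one). -/
open Matrix Polynomial

/-- If the bordered matrix `J(u,λ) = [[A−λI, −u],[−2uᵀ, 0]]` is nonsingular for a real unit
eigenpair `(λ,u)` of `A`, then `λ` is a simple eigenvalue of `A`. -/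
theorem simple_of_bordered_nonsingular {n : ℕ}
    (A : Matrix (Fin n) (Fin n) ℝ) (lam : ℝ) (u : Fin n → ℝ)
    (heig : A *ᵥ u = lam • u) (hnorm : u ⬝ᵥ u = 1)
    (hJ : (Matrix.fromBlocks (A - lam • 1)
        (Matrix.of fun i (_ : Fin 1) => -u i)
        (Matrix.of fun (_ : Fin 1) j => -2 * u j)
        (0 : Matrix (Fin 1) (Fin 1) ℝ)).det ≠ 0) :
    Polynomial.rootMultiplicity lam A.charpoly = 1 := by
  classical
  set B : Matrix (Fin n) (Fin n) ℝ := A - lam • 1 with hB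
  have hu0 : u ≠ 0 := by
    intro h
    rw [h] at hnorm
    simp at hnorm
  have hBu : B *ᵥ u = 0 := by
    simp [hB, Matrix.sub_mulVec, Matrix.smul_mulVec, heig]
  -- every kernel vector of B is a multiple of u
  have hker : ∀ x : Fin n → ℝ, B *ᵥ x = 0 → x = (u ⬝ᵥ x) • u := by
    intro x hx
    set y : Fin n → ℝ := x - (u ⬝ᵥ x) • u with hy
    have hBy : B *ᵥ y = 0 := by
      simp [hy, Matrix.mulVec_sub, Matrix.mulVec_smul, hx, hBu]
    have huy : u ⬝ᵥ y = 0 := by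
      simp [hy, dotProduct_sub, dotProduct_smul, hnorm, smul_eq_mul]
    have hy0 : y = 0 := by
      by_contra hy0
      apply hJ
      rw [← Matrix.exists_mulVec_eq_zero_iff]
      refine ⟨Sum.elim y (0 : Fin 1 → ℝ), ?_, ?_⟩
      · intro h
        apply hy0
        funext i
        exact congrFun h (Sum.inl i)
      · rw [Matrix.fromBlocks_mulVec]
        have hbot : (Matrix.of fun (_ : Fin 1) j => -2 * u j) *ᵥ y = 0 := by
          funext i
          have h2 : ∑ j, u j * y j = 0 := huy
          have he : ((Matrix.of fun (_ : Fin 1) j => -2 * u j) *ᵥ y) i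
              = ∑ j, -2 * u j * y j := rfl
          have h3 : ∑ j, -2 * u j * y j = -2 * ∑ j, u j * y j := by
            rw [Finset.mul_sum]
            exact Finset.sum_congr rfl fun j _ => by ring
          rw [he, h3, h2, mul_zero]
          rfl
        have htop : B *ᵥ y + (Matrix.of fun i (_ : Fin 1) => -u i) *ᵥ (0 : Fin 1 → ℝ) = 0 := by
          simp [hBy]
        have hbot' : (Matrix.of fun (_ : Fin 1) j => -2 * u j) *ᵥ y
            + (0 : Matrix (Fin 1) (Fin 1) ℝ) *ᵥ (0 : Fin 1 → ℝ) = 0 := by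
          rw [Matrix.zero_mulVec, add_zero, hbot]
        simp only [Sum.elim_comp_inl, Sum.elim_comp_inr]
        rw [htop, hbot']
        funext i
        cases i <;> rfl
    rw [hy] at hy0
    exact sub_eq_zero.mp hy0
  -- a nonzero left-kernel vector of B
  obtain ⟨w, hw0, hwB⟩ : ∃ w : Fin n → ℝ, w ≠ 0 ∧ w ᵥ* B = 0 := by
    have hdet : B.det = 0 := by
      rw [← Matrix.exists_mulVec_eq_zero_iff]
      exact ⟨u, hu0, hBu⟩
    obtain ⟨w, hw0, hwB⟩ := (Matrix.exists_vecMul_eq_zero_iff).mpr hdet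
    exact ⟨w, hw0, hwB⟩
  have hwu : w ⬝ᵥ u ≠ 0 := by
    intro h
    apply hJ
    rw [← Matrix.exists_vecMul_eq_zero_iff]
    refine ⟨Sum.elim w (0 : Fin 1 → ℝ), ?_, ?_⟩
    · intro hww
      apply hw0
      funext i
      exact congrFun hww (Sum.inl i)
    · rw [Matrix.vecMul_fromBlocks]
      have hbot : w ᵥ* (Matrix.of fun i (_ : Fin 1) => -u i) = 0 := by
        funext i
        have h2 : ∑ j, w j * u j = 0 := h
        have he : (w ᵥ* (Matrix.of fun i (_ : Fin 1) => -u i)) i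
            = ∑ j, w j * -u j := rfl
        have h3 : ∑ j, w j * -u j = -∑ j, w j * u j := by
          rw [← Finset.sum_neg_distrib]
          exact Finset.sum_congr rfl fun j _ => by ring
        rw [he, h3, h2, neg_zero]
        rfl
      have htop : w ᵥ* B + (0 : Fin 1 → ℝ) ᵥ* (Matrix.of fun (_ : Fin 1) j => -2 * u j) = 0 := by
        simp [hwB]
      have hbot' : w ᵥ* (Matrix.of fun i (_ : Fin 1) => -u i)
          + (0 : Fin 1 → ℝ) ᵥ* (0 : Matrix (Fin 1) (Fin 1) ℝ) = 0 := by
        rw [Matrix.zero_vecMul, add_zero, hbot]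
      simp only [Sum.elim_comp_inl, Sum.elim_comp_inr]
      rw [htop, hbot']
      funext i
      cases i <;> rfl
  -- kernel of B^2 equals kernel of B
  have hker2 : ∀ x : Fin n → ℝ, B *ᵥ (B *ᵥ x) = 0 → B *ᵥ x = 0 := by
    intro x hx
    have h1 := hker _ hx
    have h2 : w ⬝ᵥ (B *ᵥ x) = 0 := by
      rw [Matrix.dotProduct_mulVec, hwB, zero_dotProduct]
    rw [h1] at h2 ⊢
    rw [dotProduct_smul, smul_eq_mul] at h2
    rcases mul_eq_zero.mp h2 with hc | hc
    · rw [hc, zero_smul]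
    · exact absurd hc hwu
  -- the endomorphism given by B
  set φ : Module.End ℝ (Fin n → ℝ) := Matrix.toLin' B with hφ
  have hφapp : ∀ x, φ x = B *ᵥ x := fun x => Matrix.toLin'_apply B x
  -- kernel of all powers of φ equals span of u
  have hkerφ : LinearMap.ker φ = Submodule.span ℝ {u} := by
    apply le_antisymm
    · intro x hx
      rw [LinearMap.mem_ker, hφapp] at hx
      rw [Submodule.mem_span_singleton]
      exact ⟨u ⬝ᵥ x, (hker x hx).symm⟩
    · rw [Submodule.span_singleton_le_iff_mem, LinearMap.mem_ker, hφapp]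
      exact hBu
  have hkerpow : ∀ k : ℕ, LinearMap.ker (φ ^ (k + 1)) = LinearMap.ker φ := by
    intro k
    induction k with
    | zero => simp [pow_one]
    | succ k ih =>
      apply le_antisymm
      · intro x hx
        rw [LinearMap.mem_ker] at hx ⊢
        have hx' : (φ ^ (k + 1)) (φ x) = 0 := by
          rw [← Module.End.mul_apply, ← pow_succ]
          exact hx
        have : φ x ∈ LinearMap.ker (φ ^ (k + 1)) := hx'
        rw [ih, LinearMap.mem_ker, hφapp, hφapp] at this
        exact hker2 x this
      · intro x hx
        rw [LinearMap.mem_ker] at hx ⊢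
        rw [pow_succ, Module.End.mul_apply, hx, map_zero]
  -- the maximal generalized eigenspace of φ at 0 is the span of u
  have hmax : φ.maxGenEigenspace 0 = Submodule.span ℝ {u} := by
    rw [← Module.End.iSup_genEigenspace_eq]
    apply le_antisymm
    · apply iSup_le
      intro k
      rw [Module.End.genEigenspace_nat]
      simp only [zero_smul, sub_zero]
      cases k with
      | zero => simp [Module.End.one_eq_id]
      | succ k => rw [hkerpow k, hkerφ]
    · refine le_trans ?_ (le_iSup _ 1)
      rw [Module.End.genEigenspace_nat]
      simp only [zero_smul, sub_zero, Nat.cast_one, pow_one]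
      rw [hkerφ]
  -- charpoly translation
  have hcm : (Matrix.charmatrix A).map (fun p => p.comp (X + C lam)) = Matrix.charmatrix B := by
    ext i j
    by_cases h : i = j
    · subst h
      simp only [Matrix.map_apply, Matrix.charmatrix_apply_eq, sub_comp, X_comp, C_comp,
        hB, Matrix.sub_apply, Matrix.smul_apply, Matrix.one_apply_eq, smul_eq_mul, mul_one,
        map_sub]
      ring
    · simp [Matrix.map_apply, Matrix.charmatrix_apply_ne _ _ _ h, hB, Matrix.sub_apply,
        Matrix.smul_apply, Matrix.one_apply_ne h]
  have hcomp : A.charpoly.comp (X + C lam) = B.charpoly := by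
    have hf : A.charpoly.comp (X + C lam)
        = ((aeval (X + C lam)).toRingHom : ℝ[X] →+* ℝ[X]) A.charpoly := by
      simp [comp_eq_aeval]
    rw [hf, Matrix.charpoly, RingHom.map_det, Matrix.charpoly, ← hcm]
    rfl
  -- charpoly of φ is charpoly of B
  have hφcp : φ.charpoly = B.charpoly := by
    rw [← LinearMap.charpoly_toMatrix φ (Pi.basisFun ℝ (Fin n))]
    congr 1
    rw [LinearMap.toMatrix_eq_toMatrix']
    exact LinearMap.toMatrix'_toLin' B
  -- put everything together
  rw [Polynomial.rootMultiplicity_eq_natTrailingDegree, hcomp, ← hφcp,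
    ← LinearMap.finrank_maxGenEigenspace_zero_eq, hmax]
  exact finrank_span_singleton hu0
end

section
/- Let A be an n×n real matrix with real eigenpair (λ, u), Au = λu, |u| = 1. If λ is not a simple eigenvalue of A, then the bordered matrix J(u,λ) = [[A−λI, −u],[−2uᵀ, 0]] is singular. -/
open Matrix

open Polynomial

/-- If `λ` is not a simple eigenvalue of `A` (real unit eigenpair `(λ,u)`), then the bordered
matrix `J(u,λ) = [[A−λI, −u],[−2uᵀ, 0]]` is singular. -/
theorem bordered_singular_of_not_simple {n : ℕ}
    (A : Matrix (Fin n) (Fin n) ℝ) (lam : ℝ) (u : Fin n → ℝ)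
    (heig : A *ᵥ u = lam • u) (hnorm : u ⬝ᵥ u = 1)
    (hns : Polynomial.rootMultiplicity lam A.charpoly ≠ 1) :
    (Matrix.fromBlocks (A - lam • 1)
        (Matrix.of fun i (_ : Fin 1) => -u i)
        (Matrix.of fun (_ : Fin 1) j => -2 * u j)
        (0 : Matrix (Fin 1) (Fin 1) ℝ)).det = 0 := by
  classical
  by_contra hdet
  set B : Matrix (Fin n) (Fin n) ℝ := A - lam • 1 with hB
  have hu0 : u ≠ 0 := by
    intro h; rw [h] at hnorm; simp at hnorm
  have hBu : B *ᵥ u = 0 := by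
    rw [hB, sub_mulVec, heig, smul_mulVec, one_mulVec, sub_self]
  -- key kernel fact
  have key : ∀ (x : Fin n → ℝ) (t : ℝ), B *ᵥ x = t • u → u ⬝ᵥ x = 0 → x = 0 ∧ t = 0 := by
    intro x t hx hux
    have hv : (Matrix.fromBlocks B
        (Matrix.of fun i (_ : Fin 1) => -u i)
        (Matrix.of fun (_ : Fin 1) j => -2 * u j)
        (0 : Matrix (Fin 1) (Fin 1) ℝ)) *ᵥ (Sum.elim x fun _ => t) = 0 := by
      rw [Matrix.fromBlocks_mulVec]
      have h1 : ((Sum.elim x fun _ => t) : Fin n ⊕ Fin 1 → ℝ) ∘ Sum.inl = x := rfl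
      have h2 : ((Sum.elim x fun _ => t) : Fin n ⊕ Fin 1 → ℝ) ∘ Sum.inr = fun _ => t := rfl
      rw [h1, h2]
      ext (i | i)
      · simp only [Sum.elim_inl, Pi.add_apply, Pi.zero_apply]
        have : (Matrix.of fun i (_ : Fin 1) => -u i) *ᵥ (fun _ => t) = fun i => -(t * u i) := by
          ext i; simp [Matrix.mulVec, dotProduct, Fin.sum_univ_one, mul_comm]
        rw [hx, this]
        simp [mul_comm]
      · simp only [Sum.elim_inr, Pi.add_apply, Pi.zero_apply]
        have : (Matrix.of fun (_ : Fin 1) j => -2 * u j) *ᵥ x = fun _ => -2 * (u ⬝ᵥ x) := by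
          ext i; simp [Matrix.mulVec, dotProduct, Finset.mul_sum, mul_assoc]
        rw [this]
        simp [hux]
    by_cases hxt : ((Sum.elim x fun _ => t) : Fin n ⊕ Fin 1 → ℝ) = 0
    · constructor
      · ext i; exact congrFun hxt (Sum.inl i)
      · exact congrFun hxt (Sum.inr 0)
    · exact absurd (Matrix.exists_mulVec_eq_zero_iff.mp ⟨_, hxt, hv⟩) hdet
  -- the linear maps
  set f : (Fin n → ℝ) →ₗ[ℝ] (Fin n → ℝ) := Matrix.toLin' A with hf
  set g : (Fin n → ℝ) →ₗ[ℝ] (Fin n → ℝ) := Matrix.toLin' B with hg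
  set K := LinearMap.ker g with hK
  set Rg := LinearMap.range g with hRg
  have hgapply : ∀ x, g x = B *ᵥ x := fun x => Matrix.toLin'_apply B x
  have hfapply : ∀ x, f x = A *ᵥ x := fun x => Matrix.toLin'_apply A x
  have huK : u ∈ K := by rw [LinearMap.mem_ker, hgapply, hBu]
  -- kernel is spanned by u
  have hspan : K = Submodule.span ℝ {u} := by
    apply le_antisymm
    · intro z hz
      have hz' : B *ᵥ z = 0 := by rw [← hgapply]; exact hz
      have h1 : B *ᵥ (z - (u ⬝ᵥ z) • u) = (0:ℝ) • u := by
        rw [mulVec_sub, mulVec_smul, hz', hBu]; simp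
      have h2 : u ⬝ᵥ (z - (u ⬝ᵥ z) • u) = 0 := by
        rw [dotProduct_sub, dotProduct_smul, hnorm]; simp [smul_eq_mul]
      have := (key _ _ h1 h2).1
      have hz2 : z = (u ⬝ᵥ z) • u := by
        have := sub_eq_zero.mp this
        exact this
      rw [hz2]
      exact Submodule.smul_mem _ _ (Submodule.mem_span_singleton_self u)
    · rw [Submodule.span_singleton_le_iff_mem]; exact huK
  -- u is not in the range
  have hunr : u ∉ Rg := by
    rintro ⟨z, hz⟩
    have hz' : B *ᵥ z = u := by rw [← hgapply]; exact hz
    have h1 : B *ᵥ (z - (u ⬝ᵥ z) • u) = (1:ℝ) • u := by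
      rw [mulVec_sub, mulVec_smul, hz', hBu]; simp
    have h2 : u ⬝ᵥ (z - (u ⬝ᵥ z) • u) = 0 := by
      rw [dotProduct_sub, dotProduct_smul, hnorm]; simp [smul_eq_mul]
    exact one_ne_zero (key _ _ h1 h2).2
  -- disjointness
  have hdisj : K ⊓ Rg = ⊥ := by
    rw [eq_bot_iff]
    rintro z ⟨hzK, hzR⟩
    have hz : z ∈ Submodule.span ℝ {u} := hspan ▸ hzK
    obtain ⟨c, hc⟩ := Submodule.mem_span_singleton.mp hz
    rcases eq_or_ne c 0 with h | h
    · rw [← hc, h, zero_smul]; exact Submodule.zero_mem _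
    · exfalso
      apply hunr
      have : u = c⁻¹ • z := by rw [← hc, smul_smul, inv_mul_cancel₀ h, one_smul]
      rw [this]
      exact Submodule.smul_mem _ _ hzR
  -- finrank of kernel
  have hfinK : Module.finrank ℝ K = 1 := by
    rw [hspan]; exact finrank_span_singleton hu0
  -- complementarity
  have hcompl : IsCompl K Rg := by
    constructor
    · rw [disjoint_iff]; exact hdisj
    · rw [codisjoint_iff]
      apply Submodule.eq_top_of_finrank_eq
      have hrn : Module.finrank ℝ Rg + Module.finrank ℝ K = Module.finrank ℝ (Fin n → ℝ) :=
        LinearMap.finrank_range_add_finrank_ker g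
      have := Submodule.finrank_sup_add_finrank_inf_eq K Rg
      rw [hdisj] at this
      simp only [finrank_bot, add_zero] at this
      omega
  -- invariance
  have heigK : ∀ z, z ∈ K → f z = lam • z := by
    intro z hz
    have hz' : B *ᵥ z = 0 := by rw [← hgapply]; exact hz
    have hAz : A *ᵥ z = lam • z := by
      have h := congrArg (fun w => w + lam • z) hz'
      simpa [hB, sub_mulVec, smul_mulVec, one_mulVec, sub_add_cancel] using h
    rw [hfapply, hAz]
  have hKinv : ∀ z ∈ K, f z ∈ K := by
    intro z hz
    rw [heigK z hz]
    exact Submodule.smul_mem _ _ hz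
  have hRinv : ∀ z ∈ Rg, f z ∈ Rg := by
    rintro z ⟨y, hy⟩
    have hcomm : g (f y) = f (g y) := by
      rw [hgapply, hfapply, hfapply, hgapply, mulVec_mulVec, mulVec_mulVec]
      congr 1
      rw [hB]
      noncomm_ring
    exact ⟨f y, by rw [hcomm, hy]⟩
  set fk := f.restrict hKinv with hfk
  set fr := f.restrict hRinv with hfr
  -- charpoly factorization
  have hconj : (Submodule.prodEquivOfIsCompl K Rg hcompl).symm.conj f = fk.prodMap fr := by
    apply LinearMap.ext
    rintro ⟨x, y⟩
    rw [LinearEquiv.conj_apply]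
    simp only [LinearMap.coe_comp, LinearEquiv.coe_coe, Function.comp_apply,
      LinearEquiv.symm_symm]
    rw [LinearEquiv.symm_apply_eq]
    rw [Submodule.coe_prodEquivOfIsCompl', Submodule.coe_prodEquivOfIsCompl']
    rw [map_add, LinearMap.prodMap_apply]
    rfl
  have hcp : f.charpoly = fk.charpoly * fr.charpoly := by
    rw [← LinearMap.charpoly_prodMap, ← hconj, LinearEquiv.charpoly_conj]
  have hchA : A.charpoly = f.charpoly := by
    rw [← LinearMap.charpoly_toMatrix f (Pi.basisFun ℝ (Fin n)),
      LinearMap.toMatrix_eq_toMatrix', hf, LinearMap.toMatrix'_toLin']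
  -- charpoly of fk
  have hcfk : fk.charpoly = X - C lam := by
    let bK : Module.Basis (Fin 1) ℝ K := Module.basisUnique (Fin 1) hfinK
    rw [← LinearMap.charpoly_toMatrix fk bK]
    have hfkx : fk (bK 0) = lam • bK 0 := by
      apply Subtype.ext
      rw [hfk, LinearMap.restrict_coe_apply]
      rw [heigK _ (bK 0).2]
      rfl
    have hm : LinearMap.toMatrix bK bK fk = Matrix.diagonal (fun _ => lam) := by
      ext i j
      have hi : i = 0 := Subsingleton.elim i 0
      have hj : j = 0 := Subsingleton.elim j 0
      subst hi; subst hj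
      rw [LinearMap.toMatrix_apply, hfkx, _root_.map_smul]
      simp [Module.Basis.repr_self]
    rw [hm, Matrix.charpoly, Matrix.det_fin_one]
    simp [Matrix.charmatrix_apply_eq]
  -- fr does not have lam as root of its charpoly
  have hfrroot : ¬ (fr.charpoly).IsRoot lam := by
    intro hroot
    set bR := Module.finBasis ℝ Rg with hbR
    set N := LinearMap.toMatrix bR bR fr with hN
    have h1 : N.charpoly = fr.charpoly := LinearMap.charpoly_toMatrix fr bR
    have h2 : N.charpoly.eval lam = 0 := by rw [h1]; exact hroot
    have h3 : (Matrix.charmatrix N).map (Polynomial.eval lam) = lam • (1 : Matrix _ _ ℝ) - N := by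
      ext i j
      by_cases hij : i = j
      · subst hij
        simp [Matrix.charmatrix_apply_eq, Matrix.one_apply_eq]
      · simp [Matrix.charmatrix_apply_ne _ _ _ hij, Matrix.one_apply_ne hij]
    have h4 : (lam • (1 : Matrix _ _ ℝ) - N).det = 0 := by
      rw [← h3]
      have h5 := (Polynomial.evalRingHom lam).map_det (Matrix.charmatrix N)
      have h6 : (Polynomial.evalRingHom lam).mapMatrix (Matrix.charmatrix N)
          = (Matrix.charmatrix N).map (Polynomial.eval lam) := rfl
      rw [h6] at h5
      rw [← h5]
      exact h2
    obtain ⟨v, hv0, hv⟩ := Matrix.exists_mulVec_eq_zero_iff.mpr h4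
    have hNv : N *ᵥ v = lam • v := by
      rw [sub_mulVec, smul_mulVec, one_mulVec] at hv
      have := sub_eq_zero.mp hv
      exact this.symm
    set w : Rg := ∑ i, v i • bR i with hw
    have hreprw : ⇑(bR.repr w) = v := by
      rw [hw, Module.Basis.repr_sum_self]
    have hfrw : fr w = lam • w := by
      have h5 : fr w = Matrix.toLin bR bR N w := by rw [hN, Matrix.toLin_toMatrix]
      rw [h5, Matrix.toLin_apply, hreprw, hNv, hw, Finset.smul_sum]
      apply Finset.sum_congr rfl
      intro i _
      rw [smul_smul]
      rfl
    have hw0 : w ≠ 0 := by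
      intro h
      apply hv0
      rw [← hreprw, h, map_zero]
      rfl
    have hwK : (w : Fin n → ℝ) ∈ K := by
      have h6 : f (w : Fin n → ℝ) = lam • (w : Fin n → ℝ) := by
        have := congrArg (Subtype.val) hfrw
        rw [hfr, LinearMap.restrict_coe_apply] at this
        exact this
      rw [LinearMap.mem_ker, hgapply, hB, sub_mulVec, smul_mulVec, one_mulVec,
        ← hfapply, h6, sub_self]
    have hwmem : (w : Fin n → ℝ) ∈ K ⊓ Rg := ⟨hwK, w.2⟩
    rw [hdisj] at hwmem
    exact hw0 (Subtype.ext hwmem)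
  -- conclude
  apply hns
  rw [hchA, hcp, rootMultiplicity_mul
    (mul_ne_zero (LinearMap.charpoly_monic fk).ne_zero (LinearMap.charpoly_monic fr).ne_zero),
    hcfk, rootMultiplicity_X_sub_C_self, rootMultiplicity_eq_zero hfrroot]
end
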